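/- Let G be the Frobenius group of order 20, i.e., G = ⟨x, y | x⁴ = y⁵ = 1, x⁻¹yx = y²⟩ (equivalently, the semidirect product of Z₅ by Aut(Z₅) with the natural faithful action). Then G has exactly two proper non-trivial normal subgroups: A = ⟨y⟩ of order 5, which is 2-decomposable, and B = ⟨y, x²⟩ of order 10, which is 3-decomposable; consequently G is {1,2,3}-decomposable. -/
import Mathlib

/-- `ncc A` is the number of conjugacy classes of `G` contained in the subgroup `A`. -/
noncomputable def ncc {G : Type*} [Group G] (A : Subgroup G) : ℕ :=
  Nat.card {c : ConjClasses G // c.carrier ⊆ (A : Set G)}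

/-- `KG G` is the set of values `ncc A` for `A` a proper normal subgroup of `G`. -/
def KG (G : Type*) [Group G] : Set ℕ :=
  {n | ∃ A : Subgroup G, A.Normal ∧ A ≠ ⊤ ∧ ncc A = n}

/-- `G` is `X`-decomposable if `KG G = X`. -/
def XDecomposable (G : Type*) [Group G] (X : Set ℕ) : Prop := KG G = X

/-- The Frobenius group of order 20: the semidirect product of `Z₅` by its full automorphism
group `Aut(Z₅) ≅ Z₄` acting naturally (faithfully). This is `SmallGroup(20,3)` in GAP,
i.e. the group `⟨x, y | x⁴ = y⁵ = 1, x⁻¹yx = y²⟩`. -/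
def F20 : Type :=
  SemidirectProduct (Multiplicative (ZMod 5)) (MulAut (Multiplicative (ZMod 5)))
    (MonoidHom.id (MulAut (Multiplicative (ZMod 5))))

noncomputable instance : Group F20 :=
  inferInstanceAs (Group (SemidirectProduct _ _ _))

namespace F20aux

abbrev M5 := Multiplicative (ZMod 5)
abbrev H5 := MulAut M5

instance : DecidableEq H5 := fun a b =>
  decidable_of_iff (∀ z : M5, a z = b z) ⟨fun h => DFunLike.ext a b h, fun h z => h ▸ rfl⟩

def addAut (a b : ZMod 5) (h1 : ∀ z, b * (a * z) = z) (h2 : ∀ z, a * (b * z) = z) :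
    AddAut (ZMod 5) :=
  { toFun := (a * ·), invFun := (b * ·), left_inv := h1, right_inv := h2,
    map_add' := mul_add a }

def aut (a b : ZMod 5) (h1 : ∀ z, b * (a * z) = z) (h2 : ∀ z, a * (b * z) = z) : H5 :=
  AddEquiv.toMultiplicative (addAut a b h1 h2)

def aut1 : H5 := aut 1 1 (by decide) (by decide)
def aut2 : H5 := aut 2 3 (by decide) (by decide)
def aut3 : H5 := aut 3 2 (by decide) (by decide)
def aut4 : H5 := aut 4 4 (by decide) (by decide)

theorem aut_apply (a b : ZMod 5) (h1 h2) (z : ZMod 5) :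
    aut a b h1 h2 (Multiplicative.ofAdd z) = Multiplicative.ofAdd (a * z) := rfl

theorem eq_aut_of_apply (e : H5) (a b : ZMod 5) (h1) (h2)
    (h : e (Multiplicative.ofAdd 1) = Multiplicative.ofAdd a) : e = aut a b h1 h2 := by
  apply DFunLike.ext
  intro m
  have hm : m = (Multiplicative.ofAdd (1 : ZMod 5)) ^ (Multiplicative.toAdd m).val := by
    rw [← ofAdd_nsmul]
    simp [nsmul_eq_mul, ZMod.natCast_rightInverse (Multiplicative.toAdd m)]
  rw [hm, map_pow, h, map_pow, aut_apply, ← ofAdd_nsmul, ← ofAdd_nsmul]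
  congr 1
  simp only [nsmul_eq_mul, mul_one, mul_comm]

instance : Fintype H5 := by
  refine ⟨{aut1, aut2, aut3, aut4}, fun e => ?_⟩
  have h0 : e (Multiplicative.ofAdd 1) ≠ Multiplicative.ofAdd 0 := by
    intro h
    have := e.injective (a₁ := Multiplicative.ofAdd 1) (a₂ := 1) (by simpa using h)
    exact absurd this (by decide)
  have hall : ∀ c : ZMod 5, c = 0 ∨ c = 1 ∨ c = 2 ∨ c = 3 ∨ c = 4 := by decide
  simp only [Finset.mem_insert, Finset.mem_singleton]
  rcases hall (Multiplicative.toAdd (e (Multiplicative.ofAdd 1))) with h|h|h|h|h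
  · exact absurd (by simpa using congrArg Multiplicative.ofAdd h) h0
  all_goals {
    first
    | exact Or.inl (eq_aut_of_apply e _ _ _ _ (by simpa using congrArg Multiplicative.ofAdd h))
    | exact Or.inr (Or.inl (eq_aut_of_apply e _ _ _ _ (by simpa using congrArg Multiplicative.ofAdd h)))
    | exact Or.inr (Or.inr (Or.inl (eq_aut_of_apply e _ _ _ _ (by simpa using congrArg Multiplicative.ofAdd h))))
    | exact Or.inr (Or.inr (Or.inr (eq_aut_of_apply e _ _ _ _ (by simpa using congrArg Multiplicative.ofAdd h)))) }

open SemidirectProduct Multiplicative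

instance : DecidableEq F20 := fun g h =>
  decidable_of_iff (SemidirectProduct.left g = SemidirectProduct.left h ∧
      SemidirectProduct.right g = SemidirectProduct.right h)
    ⟨fun ⟨h1, h2⟩ => SemidirectProduct.ext h1 h2, fun h => by subst h; exact ⟨rfl, rfl⟩⟩

def f20Equiv : F20 ≃ M5 × H5 where
  toFun g := (SemidirectProduct.left g, SemidirectProduct.right g)
  invFun p := ⟨p.1, p.2⟩
  left_inv _ := rfl
  right_inv _ := rfl

instance : Fintype F20 := Fintype.ofEquiv _ f20Equiv.symm

def σF : H5 := aut 3 2 (by decide) (by decide)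

def x : F20 := inr σF
def y : F20 := inl (ofAdd 1)

noncomputable instance instDecIsConj : DecidableRel (IsConj (α := F20)) := fun a b =>
  decidable_of_iff (∃ c : F20, c * a * c⁻¹ = b) isConj_iff.symm

noncomputable instance : DecidableEq (ConjClasses F20) :=
  @Quotient.decidableEq F20 (IsConj.setoid F20) instDecIsConj

noncomputable instance : Fintype (ConjClasses F20) :=
  @Quotient.fintype F20 _ (IsConj.setoid F20) instDecIsConj

noncomputable def decCarrierSub (s : Set F20) [DecidablePred (· ∈ s)] :
    DecidablePred (fun c : ConjClasses F20 => c.carrier ⊆ s) := fun c =>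
  decidable_of_iff (∀ g : F20, ConjClasses.mk g = c → g ∈ s)
    ⟨fun h a ha => h a (ConjClasses.mem_carrier_iff_mk_eq.1 ha),
     fun h g hg => h (ConjClasses.mem_carrier_iff_mk_eq.2 hg)⟩

noncomputable def πF : F20 →* H5 := SemidirectProduct.rightHom

noncomputable def Asub : Subgroup F20 := πF.ker

noncomputable instance : DecidablePred (· ∈ Asub) := fun g =>
  decidable_of_iff (πF g = 1) (πF.mem_ker).symm

theorem k2key : ∀ a b : H5, a ^ 2 = 1 → b ^ 2 = 1 → (a * b) ^ 2 = 1 := by decide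
theorem k2inv : ∀ a : H5, a ^ 2 = 1 → a⁻¹ ^ 2 = 1 := by decide

def K2 : Subgroup H5 where
  carrier := {h | h ^ 2 = 1}
  one_mem' := by decide
  mul_mem' := fun {a b} ha hb => k2key a b ha hb
  inv_mem' := fun {a} ha => k2inv a ha

instance : DecidablePred (· ∈ K2) := fun h => inferInstanceAs (Decidable (h ^ 2 = 1))

noncomputable def Bsub : Subgroup F20 := K2.comap πF

noncomputable instance : DecidablePred (· ∈ Bsub) := fun g =>
  decidable_of_iff ((πF g) ^ 2 = 1) Iff.rfl

noncomputable instance decMemCoe (S : Subgroup F20) [DecidablePred (· ∈ S)] :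
    DecidablePred (· ∈ (S : Set F20)) := fun g =>
  decidable_of_iff (g ∈ S) SetLike.mem_coe.symm

noncomputable instance decMemBotCoe : DecidablePred (· ∈ ((⊥ : Subgroup F20) : Set F20)) :=
  fun g => decidable_of_iff (g = 1) (by simp)

theorem ncc_eq (S : Subgroup F20) [inst : DecidablePred (· ∈ (S : Set F20))] :
    ncc S = @Fintype.card {c : ConjClasses F20 // c.carrier ⊆ (S : Set F20)}
      (@Subtype.fintype _ _ (decCarrierSub _) _) :=
  @Nat.card_eq_fintype_card _ (@Subtype.fintype _ _ (decCarrierSub _) _)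

theorem card_eq (S : Subgroup F20) [inst : DecidablePred (· ∈ S)] :
    Nat.card S = @Fintype.card S (@Subtype.fintype _ _ inst _) :=
  @Nat.card_eq_fintype_card _ (@Subtype.fintype _ _ inst _)

theorem ncc_Asub : ncc Asub = 2 := by rw [ncc_eq]; decide
theorem ncc_Bsub : ncc Bsub = 3 := by rw [ncc_eq]; decide
theorem ncc_bot : ncc (⊥ : Subgroup F20) = 1 := by rw [ncc_eq]; decide

theorem zpowers_y : Subgroup.zpowers y = Asub := by
  apply le_antisymm
  · exact Subgroup.zpowers_le.mpr (by decide)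
  · intro g hg
    have key : ∀ g : F20, g ∈ Asub → ∃ a : Fin 5, g = y ^ (a : ℕ) := by decide
    obtain ⟨a, rfl⟩ := key g hg
    exact pow_mem (Subgroup.mem_zpowers y) _

set_option maxHeartbeats 2000000 in
theorem closure_yx2 : Subgroup.closure {y, x ^ 2} = Bsub := by
  apply le_antisymm
  · rw [Subgroup.closure_le, Set.insert_subset_iff, Set.singleton_subset_iff]
    exact ⟨SetLike.mem_coe.mpr (by decide), SetLike.mem_coe.mpr (by decide)⟩
  · intro g hg
    have key : ∀ g : F20, g ∈ Bsub → ∃ a : Fin 5, ∃ b : Fin 2,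
        g = y ^ (a : ℕ) * (x ^ 2) ^ (b : ℕ) := by decide
    obtain ⟨a, b, hab⟩ := key g hg
    rw [hab]
    refine mul_mem (pow_mem ?_ _) (pow_mem ?_ _)
    · exact Subgroup.subset_closure (Set.mem_insert _ _)
    · exact Subgroup.subset_closure (Set.mem_insert_of_mem _ rfl)

theorem Asub_normal : Asub.Normal := πF.normal_ker

theorem K2_normal : K2.Normal := by
  have key : ∀ n g : H5, n ^ 2 = 1 → (g * n * g⁻¹) ^ 2 = 1 := by decide
  exact ⟨fun n hn g => key n g hn⟩

theorem Bsub_normal : Bsub.Normal := K2_normal.comap πF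

theorem y_mem_normal (N : Subgroup F20) (hN : N.Normal) (h : N ≠ ⊥) : y ∈ N := by
  obtain ⟨⟨g, hgN⟩, hg⟩ := Subgroup.ne_bot_iff_exists_ne_one.mp h
  have hg1 : g ≠ 1 := by simpa [Subtype.ext_iff] using hg
  have step1 : ∀ g : F20, g ≠ 1 → ∃ m : Fin 2,
      g ^ ((m : ℕ) + 1) * (y * g ^ ((m : ℕ) + 1) * y⁻¹) ∈ Asub ∧
      g ^ ((m : ℕ) + 1) * (y * g ^ ((m : ℕ) + 1) * y⁻¹) ≠ 1 := by decide
  obtain ⟨m, hz, hz1⟩ := step1 g hg1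
  have hzN : g ^ ((m : ℕ) + 1) * (y * g ^ ((m : ℕ) + 1) * y⁻¹) ∈ N :=
    N.mul_mem (N.pow_mem hgN _) (hN.conj_mem _ (N.pow_mem hgN _) y)
  have step2 : ∀ z : F20, z ∈ Asub → z ≠ 1 → ∃ j : Fin 4, y = z ^ ((j : ℕ) + 1) := by decide
  obtain ⟨j, hj⟩ := step2 _ hz hz1
  rw [hj]
  exact N.pow_mem hzN _

theorem H5_cases (K : Subgroup H5) : K = ⊥ ∨ K = K2 ∨ K = ⊤ := by
  have hall : ∀ h : H5, h = 1 ∨ h = σF ∨ h = σF ^ 2 ∨ h = σF ^ 3 := by decide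
  by_cases hσ : σF ∈ K
  · refine Or.inr (Or.inr (eq_top_iff.mpr fun h _ => ?_))
    rcases hall h with rfl | rfl | rfl | rfl
    · exact K.one_mem
    · exact hσ
    · exact K.pow_mem hσ 2
    · exact K.pow_mem hσ 3
  by_cases hσ3 : σF ^ 3 ∈ K
  · exfalso
    have := K.pow_mem hσ3 3
    rw [show (σF ^ 3) ^ 3 = σF by decide] at this
    exact hσ this
  by_cases hσ2 : σF ^ 2 ∈ K
  · refine Or.inr (Or.inl (Subgroup.ext fun h => ?_))
    constructor
    · intro hh
      rcases hall h with rfl | rfl | rfl | rfl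
      · exact K2.one_mem
      · exact absurd hh hσ
      · decide
      · exact absurd hh hσ3
    · intro hh
      rcases hall h with rfl | rfl | rfl | rfl
      · exact K.one_mem
      · exact absurd hh (by decide)
      · exact hσ2
      · exact absurd hh (by decide)
  · refine Or.inl (Subgroup.ext fun h => ?_)
    rw [Subgroup.mem_bot]
    constructor
    · intro hh
      rcases hall h with rfl | rfl | rfl | rfl
      · rfl
      · exact absurd hh hσ
      · exact absurd hh hσ2
      · exact absurd hh hσ3
    · rintro rfl; exact K.one_mem

theorem normal_classification (N : Subgroup F20) (hN : N.Normal) (hbot : N ≠ ⊥)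
    (htop : N ≠ ⊤) : N = Asub ∨ N = Bsub := by
  have hy : y ∈ N := y_mem_normal N hN hbot
  have hA : Asub ≤ N := by rw [← zpowers_y]; exact Subgroup.zpowers_le.mpr hy
  have hker : πF.ker ≤ N := hA
  have hNeq : (N.map πF).comap πF = N := Subgroup.comap_map_eq_self hker
  rcases H5_cases (N.map πF) with h | h | h
  · left
    rw [← hNeq, h, MonoidHom.comap_bot]
    rfl
  · right
    rw [← hNeq, h]
    rfl
  · exfalso
    apply htop
    rw [← hNeq, h]
    ext g
    simp [Subgroup.mem_comap]

theorem x_not_mem_Asub : x ∉ Asub := by decide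
theorem x_not_mem_Bsub : x ∉ Bsub := by decide

theorem Asub_ne_top : Asub ≠ ⊤ := fun h => x_not_mem_Asub (h ▸ Subgroup.mem_top x)
theorem Bsub_ne_top : Bsub ≠ ⊤ := fun h => x_not_mem_Bsub (h ▸ Subgroup.mem_top x)

instance : Nontrivial F20 := ⟨⟨y, 1, by decide⟩⟩

end F20aux

open F20aux in
/-- The Frobenius group of order 20, `⟨x, y | x⁴ = y⁵ = 1, x⁻¹yx = y²⟩`, has exactly two
proper non-trivial normal subgroups: `A = ⟨y⟩` of order 5, which is 2-decomposable, and
`B = ⟨y, x²⟩` of order 10, which is 3-decomposable; consequently it is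
`{1,2,3}`-decomposable. -/
theorem frobenius20_decomposable :
    Nat.card F20 = 20 ∧
    ∃ x y : F20, orderOf x = 4 ∧ orderOf y = 5 ∧ x⁻¹ * y * x = y ^ 2 ∧
      ∀ A B : Subgroup F20, A = Subgroup.zpowers y → B = Subgroup.closure {y, x ^ 2} →
        A.Normal ∧ Nat.card A = 5 ∧ ncc A = 2 ∧
        B.Normal ∧ Nat.card B = 10 ∧ ncc B = 3 ∧
        (∀ N : Subgroup F20, N.Normal → N ≠ ⊥ → N ≠ ⊤ → N = A ∨ N = B) ∧
        XDecomposable F20 {1, 2, 3} := by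
  refine ⟨by rw [Nat.card_eq_fintype_card]; decide, F20aux.x, F20aux.y, ?_, ?_, by decide, ?_⟩
  · exact (orderOf_eq_iff (by norm_num)).2 ⟨by decide, by decide⟩
  · haveI : Fact (Nat.Prime 5) := ⟨by norm_num⟩
    exact orderOf_eq_prime (by decide) (by decide)
  · intro A B hA hB
    rw [hA, zpowers_y]
    rw [hB, closure_yx2]
    refine ⟨Asub_normal, by rw [card_eq]; decide, ncc_Asub,
      Bsub_normal, by rw [card_eq]; decide, ncc_Bsub,
      fun N hN h1 h2 => normal_classification N hN h1 h2, ?_⟩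
    ext n
    simp only [KG, XDecomposable, Set.mem_setOf_eq, Set.mem_insert_iff, Set.mem_singleton_iff]
    constructor
    · rintro ⟨S, hSn, hStop, rfl⟩
      by_cases hSbot : S = ⊥
      · subst hSbot; exact Or.inl ncc_bot
      · rcases normal_classification S hSn hSbot hStop with rfl | rfl
        · exact Or.inr (Or.inl ncc_Asub)
        · exact Or.inr (Or.inr ncc_Bsub)
    · rintro (rfl | rfl | rfl)
      · exact ⟨⊥, ⟨fun n hn g => by rw [Subgroup.mem_bot] at hn ⊢; simp [hn]⟩, bot_ne_top, ncc_bot⟩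
      · exact ⟨Asub, Asub_normal, Asub_ne_top, ncc_Asub⟩
      · exact ⟨Bsub, Bsub_normal, Bsub_ne_top, ncc_Bsub⟩
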